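/- For each pair i < j, the polynomial λ_i + λ_j divides det(H_{n−1}^{(n)}) in the polynomial ring ℝ[λ_1, ..., λ_n], where H_{n−1}^{(n)} is the leading principal (n−1)×(n−1) submatrix of the Hurwitz matrix of ∏_{i=1}^n (s − λ_i). Consequently, ∏_{1 ≤ i < j ≤ n} (λ_i + λ_j) divides det(H_{n−1}^{(n)}). -/

import Mathlib

open Finset

/-- Signed elementary symmetric coefficients of the monic polynomial
`∏ i, (s - lam i)`:  `a k = (-1)^k e_k(lam)` for `0 ≤ k ≤ n`, and `0` otherwise
(so `a 0 = 1`). -/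
def acoef {R : Type*} [CommRing R] (n : ℕ) (lam : Fin n → R) (k : ℤ) : R :=
  if 0 ≤ k ∧ k ≤ (n : ℤ) then
    (-1 : R) ^ k.toNat *
      ∑ s ∈ Finset.powersetCard k.toNat (Finset.univ : Finset (Fin n)), ∏ i ∈ s, lam i
  else 0

/-- The `n × n` Hurwitz matrix of the monic polynomial with roots `lam`:
its (1-based) `(i,j)` entry is `a_{2j - i}`. -/
def hurwitz {R : Type*} [CommRing R] (n : ℕ) (lam : Fin n → R) :
    Matrix (Fin n) (Fin n) R :=
  Matrix.of fun i j => acoef n lam (2 * (j : ℤ) - (i : ℤ) + 1)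




lemma acoef_eq_zero {R : Type*} [CommRing R] (n : ℕ) (lam : Fin n → R) (k : ℤ)
    (h : ¬ (0 ≤ k ∧ k ≤ (n : ℤ))) : acoef n lam k = 0 := by
  unfold acoef; rw [if_neg h]

lemma vieta {R : Type*} [CommRing R] (n : ℕ) (lam : Fin n → R) (x : R) :
    ∏ t : Fin n, (x - lam t) = ∑ k ∈ Finset.range (n+1), acoef n lam (k : ℤ) * x ^ (n - k) := by
  have h : ∀ t : Fin n, x - lam t = -lam t + x := fun t => by ring
  simp_rw [h]
  rw [Finset.prod_add]
  rw [Finset.sum_powerset]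
  rw [Finset.card_univ, Fintype.card_fin]
  refine Finset.sum_congr rfl fun k hk => ?_
  rw [Finset.mem_range] at hk
  have hsum : ∀ T ∈ Finset.powersetCard k (Finset.univ : Finset (Fin n)),
      (∏ t ∈ T, -lam t) * ∏ _t ∈ Finset.univ \ T, x
        = ((-1 : R) ^ k * ∏ t ∈ T, lam t) * x ^ (n - k) := by
    intro T hT
    rw [Finset.mem_powersetCard] at hT
    rw [Finset.prod_const, Finset.card_sdiff_of_subset hT.1, Finset.card_univ, Fintype.card_fin, hT.2]
    congr 1
    rw [← hT.2]
    rw [← Finset.prod_const (b := (-1 : R)), ← Finset.prod_mul_distrib]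
    simp
  rw [Finset.sum_congr rfl hsum, ← Finset.sum_mul, ← Finset.mul_sum]
  unfold acoef
  rw [if_pos (by constructor <;> omega)]
  simp

lemma row_key {R : Type*} [CommRing R] {m : ℕ} (r0 : ℕ) (hr : r0 < m)
    (lam : Fin (m+1) → R) (l : R) :
    l ^ (m - r0) * ∏ t, (l - lam t) + (-l) ^ (m - r0) * ∏ t, (-l - lam t)
      = 2 * ∑ j0 ∈ Finset.range m,
          acoef (m+1) lam (2*(j0:ℤ) - (r0:ℤ) + 1) * l ^ (2*(m - j0)) := by
  rw [vieta (m+1) lam l, vieta (m+1) lam (-l)]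
  rw [Finset.mul_sum, Finset.mul_sum, ← Finset.sum_add_distrib]
  have hterm : ∀ k ∈ Finset.range (m+2),
      l ^ (m-r0) * (acoef (m+1) lam (k:ℤ) * l ^ (m+1-k))
        + (-l) ^ (m-r0) * (acoef (m+1) lam (k:ℤ) * (-l) ^ (m+1-k))
      = acoef (m+1) lam (k:ℤ) *
          ((1 + (-1:R) ^ ((m-r0)+(m+1-k))) * l ^ ((m-r0)+(m+1-k))) := by
    intro k _
    have h1 : l ^ (m-r0) * l ^ (m+1-k) = l ^ ((m-r0)+(m+1-k)) := (pow_add l _ _).symm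
    have h2 : (-l) ^ (m-r0) * (-l) ^ (m+1-k) = (-1:R) ^ ((m-r0)+(m+1-k)) * l ^ ((m-r0)+(m+1-k)) := by
      rw [← pow_add, neg_pow]
    calc l ^ (m-r0) * (acoef (m+1) lam (k:ℤ) * l ^ (m+1-k))
          + (-l) ^ (m-r0) * (acoef (m+1) lam (k:ℤ) * (-l) ^ (m+1-k))
        = acoef (m+1) lam (k:ℤ) * (l ^ (m-r0) * l ^ (m+1-k))
          + acoef (m+1) lam (k:ℤ) * ((-l) ^ (m-r0) * (-l) ^ (m+1-k)) := by ring
      _ = _ := by rw [h1, h2]; ring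
  rw [Finset.sum_congr rfl hterm]
  rw [← Finset.sum_filter_add_sum_filter_not (Finset.range (m+2)) (fun k => (r0+k) % 2 = 1)]
  have hzero : ∑ k ∈ (Finset.range (m+2)).filter (fun k => ¬ (r0+k) % 2 = 1),
      acoef (m+1) lam (k:ℤ) *
        ((1 + (-1:R) ^ ((m-r0)+(m+1-k))) * l ^ ((m-r0)+(m+1-k))) = 0 := by
    refine Finset.sum_eq_zero fun k hk => ?_
    rw [Finset.mem_filter, Finset.mem_range] at hk
    have hodd : Odd ((m-r0)+(m+1-k)) := by
      rw [Nat.odd_iff]; omega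
    rw [hodd.neg_one_pow]
    ring
  rw [hzero, add_zero]
  -- now restrict the RHS sum
  rw [Finset.mul_sum]
  rw [← Finset.sum_filter_add_sum_filter_not (Finset.range m)
    (fun j0 => r0 ≤ 2*j0+1 ∧ 2*j0+1 ≤ m+1+r0)]
  have hzero2 : ∑ j0 ∈ (Finset.range m).filter (fun j0 => ¬ (r0 ≤ 2*j0+1 ∧ 2*j0+1 ≤ m+1+r0)),
      2 * (acoef (m+1) lam (2*(j0:ℤ) - (r0:ℤ) + 1) * l ^ (2*(m - j0))) = 0 := by
    refine Finset.sum_eq_zero fun j0 hj0 => ?_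
    rw [Finset.mem_filter, Finset.mem_range] at hj0
    rw [acoef_eq_zero _ _ _ (by push_cast; omega)]
    ring
  rw [hzero2, add_zero]
  refine Finset.sum_bij' (fun k _ => (k + r0 - 1)/2) (fun j0 _ => 2*j0 + 1 - r0) ?_ ?_ ?_ ?_ ?_
  · intro k hk
    rw [Finset.mem_filter, Finset.mem_range] at hk ⊢
    omega
  · intro j0 hj0
    rw [Finset.mem_filter, Finset.mem_range] at hj0 ⊢
    omega
  · intro k hk
    rw [Finset.mem_filter, Finset.mem_range] at hk
    omega
  · intro j0 hj0
    rw [Finset.mem_filter, Finset.mem_range] at hj0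
    omega
  · intro k hk
    rw [Finset.mem_filter, Finset.mem_range] at hk
    have harg : 2*(((k + r0 - 1)/2 : ℕ):ℤ) - (r0:ℤ) + 1 = (k:ℤ) := by omega
    have hexp : 2*(m - (k + r0 - 1)/2) = (m-r0)+(m+1-k) := by omega
    have heven : Even ((m-r0)+(m+1-k)) := by rw [Nat.even_iff]; omega
    rw [harg, hexp, heven.neg_one_pow]
    ring


lemma det_hurwitz_eq_zero {A : Type*} [CommRing A] [IsDomain A] {m : ℕ} (hm : 0 < m)
    (lam : Fin (m+1) → A) (l : A) (hl : l ≠ 0) (h2 : (2:A) ≠ 0)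
    (ha : ∃ t, lam t = l) (hb : ∃ t, lam t = -l) :
    ((hurwitz (m+1) lam).submatrix Fin.castSucc Fin.castSucc).det = 0 := by
  classical
  rw [← Matrix.exists_mulVec_eq_zero_iff]
  refine ⟨fun j0 : Fin m => l ^ (2*(m - (j0:ℕ))), ?_, ?_⟩
  · intro h
    have := congrFun h ⟨0, hm⟩
    simp only [Pi.zero_apply] at this
    exact pow_ne_zero _ hl this
  · funext r0
    have hrow := row_key (R := A) (r0 : ℕ) r0.isLt lam l
    have hprod1 : (∏ t, (l - lam t)) = 0 := by
      obtain ⟨t, ht⟩ := ha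
      exact Finset.prod_eq_zero (Finset.mem_univ t) (by rw [ht, sub_self])
    have hprod2 : (∏ t, (-l - lam t)) = 0 := by
      obtain ⟨t, ht⟩ := hb
      exact Finset.prod_eq_zero (Finset.mem_univ t) (by rw [ht, sub_neg_eq_add, neg_add_cancel])
    rw [hprod1, hprod2, mul_zero, mul_zero, add_zero] at hrow
    have hsum : ∑ j0 ∈ Finset.range m,
        acoef (m+1) lam (2*(j0:ℤ) - ((r0:ℕ):ℤ) + 1) * l ^ (2*(m - j0)) = 0 := by
      rcases mul_eq_zero.mp hrow.symm with h | h
      · exact absurd h h2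
      · exact h
    show ∑ j0 : Fin m, _ = _
    rw [Pi.zero_apply]
    calc ∑ j0 : Fin m,
          (hurwitz (m+1) lam).submatrix Fin.castSucc Fin.castSucc r0 j0 * l ^ (2*(m - (j0:ℕ)))
        = ∑ j0 ∈ Finset.range m,
            acoef (m+1) lam (2*(j0:ℤ) - ((r0:ℕ):ℤ) + 1) * l ^ (2*(m - j0)) := by
          rw [Finset.sum_range fun j0 => acoef (m+1) lam (2*(j0:ℤ) - ((r0:ℕ):ℤ) + 1) * l ^ (2*(m - j0))]
          refine Finset.sum_congr rfl fun j0 _ => ?_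
          simp [hurwitz, Matrix.submatrix, Fin.coe_castSucc]
      _ = 0 := hsum

lemma acoef_map {R S : Type*} [CommRing R] [CommRing S] (g : R →+* S) (n : ℕ)
    (lam : Fin n → R) (k : ℤ) : g (acoef n lam k) = acoef n (fun t => g (lam t)) k := by
  unfold acoef
  split
  · rw [map_mul, map_pow, map_neg, map_one, map_sum]
    congr 1
    refine Finset.sum_congr rfl fun T _ => ?_
    rw [map_prod]
  · exact map_zero g

open MvPolynomial

/-- substituting `X b ↦ -X a` kills any multiple of `X a + X b`. -/
lemma aeval_update_eq_zero {n : ℕ} (a b : Fin n) (hab : a ≠ b)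
    (P : MvPolynomial (Fin n) ℝ) (h : (X a + X b) ∣ P) :
    aeval (Function.update (fun t => (X t : MvPolynomial (Fin n) ℝ)) b (-X a)) P = 0 := by
  obtain ⟨Q, rfl⟩ := h
  rw [map_mul, map_add, aeval_X, aeval_X, Function.update_self,
    Function.update_of_ne hab, add_neg_cancel, zero_mul]

lemma X_add_X_ne_zero {n : ℕ} (a b : Fin n) (hab : a ≠ b) :
    (X a + X b : MvPolynomial (Fin n) ℝ) ≠ 0 := by
  intro h
  have := congrArg (MvPolynomial.coeff (Finsupp.single a 1)) h
  simp [MvPolynomial.coeff_X', Finsupp.single_eq_single_iff, (Ne.symm hab)] at this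

lemma X_sub_X_ne_zero {n : ℕ} (a b : Fin n) (hab : a ≠ b) :
    (X a - X b : MvPolynomial (Fin n) ℝ) ≠ 0 := by
  intro h
  have := congrArg (MvPolynomial.coeff (Finsupp.single a 1)) h
  simp [MvPolynomial.coeff_X', Finsupp.single_eq_single_iff, (Ne.symm hab)] at this

lemma prime_X_mv {n : ℕ} (j : Fin (n+1)) : Prime (X j : MvPolynomial (Fin (n+1)) ℝ) := by
  have h0 : Prime (X (0 : Fin (n+1)) : MvPolynomial (Fin (n+1)) ℝ) := by
    rw [← MulEquiv.prime_iff (finSuccEquiv ℝ n).toRingEquiv.toMulEquiv]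
    have : ((finSuccEquiv ℝ n).toRingEquiv.toMulEquiv : MvPolynomial (Fin (n+1)) ℝ → Polynomial (MvPolynomial (Fin n) ℝ)) (X 0) = Polynomial.X := by
      simp [finSuccEquiv_X_zero]
    rw [this]
    exact Polynomial.prime_X
  rw [show (X j : MvPolynomial (Fin (n+1)) ℝ)
      = (renameEquiv ℝ (Equiv.swap (0 : Fin (n+1)) j)).toRingEquiv.toMulEquiv (X 0) by
    simp [Equiv.swap_apply_left]]
  rw [MulEquiv.prime_iff (renameEquiv ℝ (Equiv.swap (0 : Fin (n+1)) j)).toRingEquiv.toMulEquiv]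
  exact h0

lemma prime_X_add_X {n : ℕ} (i j : Fin (n+1)) (hij : i ≠ j) :
    Prime (X i + X j : MvPolynomial (Fin (n+1)) ℝ) := by
  classical
  let f : MvPolynomial (Fin (n+1)) ℝ →ₐ[ℝ] MvPolynomial (Fin (n+1)) ℝ :=
    aeval (Function.update (fun t => (X t : MvPolynomial (Fin (n+1)) ℝ)) j (X i + X j))
  let g : MvPolynomial (Fin (n+1)) ℝ →ₐ[ℝ] MvPolynomial (Fin (n+1)) ℝ :=
    aeval (Function.update (fun t => (X t : MvPolynomial (Fin (n+1)) ℝ)) j (X j - X i))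
  have hfg : f.comp g = AlgHom.id ℝ _ := by
    apply MvPolynomial.algHom_ext
    intro t
    by_cases ht : t = j
    · subst ht
      simp only [AlgHom.comp_apply, AlgHom.id_apply, f, g, aeval_X, Function.update_self,
        map_sub, aeval_X, Function.update_self, Function.update_of_ne hij]
      ring
    · simp [f, g, Function.update_of_ne ht]
  have hgf : g.comp f = AlgHom.id ℝ _ := by
    apply MvPolynomial.algHom_ext
    intro t
    by_cases ht : t = j
    · subst ht
      simp only [AlgHom.comp_apply, AlgHom.id_apply, f, g, aeval_X, Function.update_self,
        map_add, aeval_X, Function.update_self, Function.update_of_ne hij]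
      ring
    · simp [f, g, Function.update_of_ne ht]
  let e : MvPolynomial (Fin (n+1)) ℝ ≃ₐ[ℝ] MvPolynomial (Fin (n+1)) ℝ :=
    AlgEquiv.ofAlgHom f g hfg hgf
  have : (X i + X j : MvPolynomial (Fin (n+1)) ℝ) = e.toRingEquiv.toMulEquiv (X j) := by
    show _ = f (X j)
    simp [f, aeval_X, Function.update_self, add_comm]
  rw [this, MulEquiv.prime_iff e.toRingEquiv.toMulEquiv]
  exact prime_X_mv j

lemma not_associated_pairs {n : ℕ} (i1 j1 i2 j2 : Fin (n+1)) (h1 : i1 < j1) (h2 : i2 < j2)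
    (hne : (i1, j1) ≠ (i2, j2)) :
    ¬ Associated (X i1 + X j1 : MvPolynomial (Fin (n+1)) ℝ) (X i2 + X j2) := by
  classical
  intro h
  have hd : (X i1 + X j1 : MvPolynomial (Fin (n+1)) ℝ) ∣ (X i2 + X j2) := h.dvd
  have hz := aeval_update_eq_zero i1 j1 (ne_of_lt h1) _ hd
  rw [map_add, aeval_X, aeval_X] at hz
  by_cases hj : j2 = j1
  · subst hj
    have hii : i2 ≠ i1 := by
      intro hE; exact hne (by rw [hE])
    rw [Function.update_self, Function.update_of_ne (ne_of_lt h2)] at hz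
    exact X_sub_X_ne_zero i2 i1 hii (by rw [← hz]; ring)
  · by_cases hi : i2 = j1
    · subst hi
      have hj2 : j2 ≠ i1 := by
        intro hE; subst hE; exact absurd (h1.trans h2) (lt_irrefl _)
      rw [Function.update_self, Function.update_of_ne hj] at hz
      exact X_sub_X_ne_zero j2 i1 hj2 (by rw [← hz]; ring)
    · rw [Function.update_of_ne hi, Function.update_of_ne hj] at hz
      exact X_add_X_ne_zero i2 j2 (ne_of_lt h2) hz

lemma prod_primes_dvd'' {M : Type*} [CommMonoidWithZero M] [IsCancelMulZero M] {ι : Type*} [DecidableEq ι]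
    (s : Finset ι) (f : ι → M) (z : M)
    (hp : ∀ a ∈ s, Prime (f a))
    (hna : ∀ a ∈ s, ∀ b ∈ s, a ≠ b → ¬ Associated (f a) (f b))
    (hd : ∀ a ∈ s, f a ∣ z) : (∏ a ∈ s, f a) ∣ z := by
  induction s using Finset.induction_on generalizing z with
  | empty => simpa using one_dvd z
  | @insert a s ha ih =>
    obtain ⟨w, rfl⟩ := hd a (Finset.mem_insert_self a s)
    rw [Finset.prod_insert ha]
    refine mul_dvd_mul_left _ (ih w (fun b hb => hp b (Finset.mem_insert_of_mem hb))
      (fun b hb c hc hbc => hna b (Finset.mem_insert_of_mem hb) c (Finset.mem_insert_of_mem hc) hbc)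
      (fun b hb => ?_))
    have hba : b ≠ a := fun hE => ha (hE ▸ hb)
    have hbdvd : f b ∣ f a * w := hd b (Finset.mem_insert_of_mem hb)
    rcases (hp b (Finset.mem_insert_of_mem hb)).2.2 _ _ hbdvd with hfa | hw
    · exact absurd ((hp b (Finset.mem_insert_of_mem hb)).associated_of_dvd
        (hp a (Finset.mem_insert_self a s)) hfa)
        (hna b (Finset.mem_insert_of_mem hb) a (Finset.mem_insert_self a s) hba)
    · exact hw


open MvPolynomial in
/-- Each `λ_i + λ_j` (for `i < j`) divides the leading principal `(n-1)`-minor of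
the Hurwitz matrix of `∏ i, (s - λ_i)` in `ℝ[λ_1, …, λ_n]`, and consequently so
does the product `∏_{i<j} (λ_i + λ_j)`. -/
theorem lambda_sum_dvd_det_hurwitz_leading_minor (m : ℕ) :
    (∀ i j : Fin (m + 1), i < j →
      (X i + X j : MvPolynomial (Fin (m + 1)) ℝ) ∣
        ((hurwitz (m + 1) (fun i => (X i : MvPolynomial (Fin (m + 1)) ℝ))).submatrix
          Fin.castSucc Fin.castSucc).det) ∧
    ((∏ i : Fin (m + 1), ∏ j ∈ Finset.univ.filter (fun j => i < j),
        (X i + X j : MvPolynomial (Fin (m + 1)) ℝ)) ∣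
      ((hurwitz (m + 1) (fun i => (X i : MvPolynomial (Fin (m + 1)) ℝ))).submatrix
        Fin.castSucc Fin.castSucc).det) := by
  classical
  set D := ((hurwitz (m + 1) (fun i => (X i : MvPolynomial (Fin (m + 1)) ℝ))).submatrix
    Fin.castSucc Fin.castSucc).det with hD
  have part1 : ∀ i j : Fin (m + 1), i < j →
      (X i + X j : MvPolynomial (Fin (m + 1)) ℝ) ∣ D := by
    intro i j hij
    have hij' : i ≠ j := ne_of_lt hij
    have hm : 0 < m := by
      have h1 : (i : ℕ) < (j : ℕ) := hij
      have h2 : (j : ℕ) < m + 1 := j.isLt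
      omega
    set u := Function.update (fun t => (X t : MvPolynomial (Fin (m + 1)) ℝ)) j (-X i) with hu
    have hui : u i = X i := Function.update_of_ne hij' _ _
    have huj : u j = -X i := Function.update_self _ _ _
    have hsub : aeval u D = 0 := by
      have hmap : (aeval u).toRingHom D
          = ((hurwitz (m + 1) u).submatrix Fin.castSucc Fin.castSucc).det := by
        rw [hD, RingHom.map_det]
        congr 1
        apply Matrix.ext
        intro r c
        simp only [RingHom.mapMatrix_apply, Matrix.map_apply, Matrix.submatrix_apply, hurwitz,
          Matrix.of_apply]
        rw [acoef_map]
        congr 1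
        funext t
        simp
      have := det_hurwitz_eq_zero hm u (X i) (X_ne_zero i) two_ne_zero
        ⟨i, hui⟩ ⟨j, huj⟩
      rw [← this, ← hmap]
      rfl
    set I := Ideal.span {(X i + X j : MvPolynomial (Fin (m + 1)) ℝ)} with hI
    have hmem : (X i + X j : MvPolynomial (Fin (m + 1)) ℝ) ∈ I :=
      Ideal.subset_span (Set.mem_singleton _)
    have hcomp : (Ideal.Quotient.mk I).comp (aeval u).toRingHom = Ideal.Quotient.mk I := by
      apply MvPolynomial.ringHom_ext
      · intro r
        simp
      · intro t
        by_cases ht : t = j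
        · show Ideal.Quotient.mk I (aeval u (X t)) = Ideal.Quotient.mk I (X t)
          rw [aeval_X, ht, huj, Ideal.Quotient.eq]
          have : (-X i - X j : MvPolynomial (Fin (m + 1)) ℝ) = -(X i + X j) := by ring
          rw [this]
          exact neg_mem hmem
        · show Ideal.Quotient.mk I (aeval u (X t)) = Ideal.Quotient.mk I (X t)
          rw [aeval_X, hu, Function.update_of_ne ht]
    have hq0 : Ideal.Quotient.mk I D = 0 := by
      calc Ideal.Quotient.mk I D = Ideal.Quotient.mk I ((aeval u).toRingHom D) :=
            (RingHom.congr_fun hcomp D).symm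
        _ = 0 := by show Ideal.Quotient.mk I (aeval u D) = 0; rw [hsub, map_zero]
    exact Ideal.mem_span_singleton.mp (Ideal.Quotient.eq_zero_iff_mem.mp hq0)
  refine ⟨part1, ?_⟩
  have hprod_eq : (∏ i : Fin (m + 1), ∏ j ∈ Finset.univ.filter (fun j => i < j),
        (X i + X j : MvPolynomial (Fin (m + 1)) ℝ))
      = ∏ p ∈ (Finset.univ ×ˢ Finset.univ).filter
          (fun p : Fin (m+1) × Fin (m+1) => p.1 < p.2), (X p.1 + X p.2) := by
    rw [Finset.prod_filter, Finset.prod_product]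
    simp_rw [Finset.prod_filter]
  rw [hprod_eq]
  refine prod_primes_dvd'' _ _ D ?_ ?_ ?_
  · intro p hp
    rw [Finset.mem_filter] at hp
    exact prime_X_add_X p.1 p.2 (ne_of_lt hp.2)
  · intro a ha b hb hab
    rw [Finset.mem_filter] at ha hb
    exact not_associated_pairs a.1 a.2 b.1 b.2 ha.2 hb.2
      (by simpa [Prod.ext_iff] using hab)
  · intro p hp
    rw [Finset.mem_filter] at hp
    exact part1 p.1 p.2 hp.2
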